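/- arXiv:math/9910062 — 2 statements merged into one kernel-verified Lean document; each statement's English description precedes it below -/
import Mathlib

section
/- Let P_1, P_2 be probability mass functions on a finite set A with full support. There exists a sequence of sets C_n ⊆ A^n such that P_1^n(C_n^c) → 0 and (1/n) log P_2^n(C_n) → -H(P_1‖P_2) as n → ∞. -/
open scoped BigOperators
open Finset Filter


private lemma stein_sum_fin_succ {A : Type*} [Fintype A] {n : ℕ} (g : (Fin (n+1) → A) → ℝ) :
    ∑ x : Fin (n+1) → A, g x = ∑ a : A, ∑ y : Fin n → A, g (Fin.cons a y) := by
  rw [← (Fin.consEquiv (fun _ : Fin (n+1) => A)).sum_comp g, Fintype.sum_prod_type]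
  rfl

private lemma stein_sum_mu {A : Type*} [Fintype A] (P : A → ℝ) (h1 : ∑ a, P a = 1) (n : ℕ) :
    ∑ x : Fin n → A, ∏ i, P (x i) = 1 := by
  induction n with
  | zero => simp
  | succ n ih =>
    rw [stein_sum_fin_succ]
    simp only [Fin.prod_univ_succ, Fin.cons_zero, Fin.cons_succ]
    simp [← Finset.mul_sum, ih, h1]

private lemma stein_m1 {A : Type*} [Fintype A] (P : A → ℝ) (h1 : ∑ a, P a = 1)
    (g : A → ℝ) (hg : ∑ a, P a * g a = 0) (n : ℕ) :
    ∑ x : Fin n → A, (∏ i, P (x i)) * (∑ i, g (x i)) = 0 := by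
  induction n with
  | zero => simp
  | succ n ih =>
    rw [stein_sum_fin_succ]
    simp only [Fin.prod_univ_succ, Fin.sum_univ_succ, Fin.cons_zero, Fin.cons_succ]
    have : ∀ a : A, ∑ y : Fin n → A, P a * (∏ i, P (y i)) * (g a + ∑ i, g (y i))
        = P a * g a * (∑ y : Fin n → A, ∏ i, P (y i))
          + P a * (∑ y : Fin n → A, (∏ i, P (y i)) * (∑ i, g (y i))) := by
      intro a
      rw [Finset.mul_sum, Finset.mul_sum, ← Finset.sum_add_distrib]
      congr 1; ext y; ring
    simp only [this, stein_sum_mu P h1, ih, mul_one, mul_zero, add_zero]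
    exact hg

private lemma stein_m2 {A : Type*} [Fintype A] (P : A → ℝ) (h1 : ∑ a, P a = 1)
    (g : A → ℝ) (hg : ∑ a, P a * g a = 0) (n : ℕ) :
    ∑ x : Fin n → A, (∏ i, P (x i)) * (∑ i, g (x i)) ^ 2
      = n * ∑ a, P a * g a ^ 2 := by
  induction n with
  | zero => simp
  | succ n ih =>
    rw [stein_sum_fin_succ]
    simp only [Fin.prod_univ_succ, Fin.sum_univ_succ, Fin.cons_zero, Fin.cons_succ]
    have : ∀ a : A, ∑ y : Fin n → A, P a * (∏ i, P (y i)) * (g a + ∑ i, g (y i)) ^ 2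
        = P a * g a ^ 2 * (∑ y : Fin n → A, ∏ i, P (y i))
          + 2 * (P a * g a) * (∑ y : Fin n → A, (∏ i, P (y i)) * (∑ i, g (y i)))
          + P a * (∑ y : Fin n → A, (∏ i, P (y i)) * (∑ i, g (y i)) ^ 2) := by
      intro a
      rw [Finset.mul_sum, Finset.mul_sum, Finset.mul_sum, ← Finset.sum_add_distrib,
        ← Finset.sum_add_distrib]
      congr 1; ext y; ring
    simp only [this, stein_sum_mu P h1, stein_m1 P h1 g hg, ih, mul_one, mul_zero, add_zero]
    rw [Finset.sum_add_distrib, ← Finset.sum_mul, h1]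
    push_cast
    ring

private lemma stein_cheb {A : Type*} [Fintype A] (P : A → ℝ) (hP : ∀ a, 0 < P a)
    (h1 : ∑ a, P a = 1) (g : A → ℝ) (hg : ∑ a, P a * g a = 0) (n : ℕ) {t : ℝ} (ht : 0 < t) :
    1 - ∑ x ∈ univ.filter (fun x : Fin n → A => |∑ i, g (x i)| ≤ t), ∏ i, P (x i)
      ≤ (n * ∑ a, P a * g a ^ 2) / t ^ 2 := by
  have hmu : ∀ x : Fin n → A, 0 ≤ ∏ i, P (x i) := fun x => prod_nonneg fun i _ => (hP _).le
  have hsplit := Finset.sum_filter_add_sum_filter_not Finset.univ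
    (fun x : Fin n → A => |∑ i, g (x i)| ≤ t) (fun x => ∏ i, P (x i))
  rw [stein_sum_mu P h1 n] at hsplit
  have h2 : 1 - ∑ x ∈ univ.filter (fun x : Fin n → A => |∑ i, g (x i)| ≤ t), ∏ i, P (x i)
      = ∑ x ∈ univ.filter (fun x : Fin n → A => ¬ |∑ i, g (x i)| ≤ t), ∏ i, P (x i) := by
    linarith
  rw [h2, ← stein_m2 P h1 g hg n, Finset.sum_div]
  have hstep : ∀ x ∈ univ.filter (fun x : Fin n → A => ¬ |∑ i, g (x i)| ≤ t),
      ∏ i, P (x i) ≤ (∏ i, P (x i)) * (∑ i, g (x i)) ^ 2 / t ^ 2 := by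
    intro x hx
    rw [Finset.mem_filter] at hx
    have h3 : t < |∑ i, g (x i)| := lt_of_not_ge hx.2
    have h4 : t ^ 2 < (∑ i, g (x i)) ^ 2 := by
      nlinarith [sq_abs (∑ i : Fin n, g (x i)), abs_nonneg (∑ i : Fin n, g (x i))]
    rw [mul_div_assoc]
    exact le_mul_of_one_le_right (hmu x) ((one_le_div (by positivity)).mpr h4.le)
  refine le_trans (Finset.sum_le_sum hstep) ?_
  refine Finset.sum_le_sum_of_subset_of_nonneg (Finset.filter_subset _ _) ?_
  intro x _ _
  exact div_nonneg (mul_nonneg (hmu x) (sq_nonneg _)) (sq_nonneg t)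

/-- Achievability part of Stein's lemma: there are decision regions `C_n` with
`P₁ⁿ(C_nᶜ) → 0` and `(1/n) log P₂ⁿ(C_n) → -H(P₁‖P₂)`. -/
theorem stmt_8 {A : Type*} [Fintype A] (P₁ P₂ : A → ℝ)
    (hP₁ : ∀ a, 0 < P₁ a) (hP₁1 : ∑ a, P₁ a = 1)
    (hP₂ : ∀ a, 0 < P₂ a) (hP₂1 : ∑ a, P₂ a = 1) :
    ∃ C : (n : ℕ) → Finset (Fin n → A),
      Filter.Tendsto (fun n : ℕ => 1 - ∑ x ∈ C n, ∏ i, P₁ (x i))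
        Filter.atTop (nhds 0) ∧
      Filter.Tendsto (fun n : ℕ => (1 / (n : ℝ)) * Real.log (∑ x ∈ C n, ∏ i, P₂ (x i)))
        Filter.atTop (nhds (-(∑ a, P₁ a * Real.log (P₁ a / P₂ a)))) := by
  set D : ℝ := ∑ a, P₁ a * Real.log (P₁ a / P₂ a) with hD
  set g : A → ℝ := fun a => Real.log (P₁ a / P₂ a) - D with hgdef
  have hg : ∑ a, P₁ a * g a = 0 := by
    simp only [hgdef, mul_sub]
    rw [Finset.sum_sub_distrib, ← Finset.sum_mul, hP₁1, one_mul, ← hD, sub_self]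
  set V : ℝ := ∑ a, P₁ a * g a ^ 2 with hVdef
  have hV0 : 0 ≤ V := Finset.sum_nonneg fun a _ => mul_nonneg (hP₁ a).le (sq_nonneg _)
  set t : ℕ → ℝ := fun n => (n : ℝ) ^ ((3:ℝ)/4) with htdef
  set C : (n : ℕ) → Finset (Fin n → A) :=
    fun n => univ.filter (fun x : Fin n → A => |∑ i, g (x i)| ≤ t n) with hCdef
  have hsumle1 : ∀ n : ℕ, ∑ x ∈ C n, ∏ i, P₁ (x i) ≤ 1 := by
    intro n
    rw [← stein_sum_mu P₁ hP₁1 n]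
    exact Finset.sum_le_sum_of_subset_of_nonneg (Finset.subset_univ _)
      (fun x _ _ => prod_nonneg fun i _ => (hP₁ _).le)
  -- Part A
  have hA : Tendsto (fun n : ℕ => 1 - ∑ x ∈ C n, ∏ i, P₁ (x i)) atTop (nhds 0) := by
    have hub : ∀ n : ℕ, 1 ≤ n → 1 - ∑ x ∈ C n, ∏ i, P₁ (x i) ≤ V * (n:ℝ) ^ (-(1/2) : ℝ) := by
      intro n hn
      have hn0 : (0:ℝ) < n := by exact_mod_cast hn
      have htpos : 0 < t n := Real.rpow_pos_of_pos hn0 _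
      have hcheb := stein_cheb P₁ hP₁ hP₁1 g hg n htpos
      have heq : ((n:ℝ) * V) / (t n) ^ 2 = V * (n:ℝ) ^ (-(1/2) : ℝ) := by
        have h2 : (t n) ^ 2 = (n:ℝ) ^ ((3:ℝ)/2) := by
          rw [htdef]
          rw [← Real.rpow_natCast ((n:ℝ) ^ ((3:ℝ)/4)) 2, ← Real.rpow_mul hn0.le]
          norm_num
        have h3 : (n:ℝ) ^ (-(1/2) : ℝ) = (n:ℝ) / (n:ℝ) ^ ((3:ℝ)/2) := by
          calc (n:ℝ) ^ (-(1/2) : ℝ) = (n:ℝ) ^ ((1:ℝ) - 3/2) := by norm_num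
            _ = (n:ℝ) ^ (1:ℝ) / (n:ℝ) ^ ((3:ℝ)/2) := Real.rpow_sub hn0 _ _
            _ = (n:ℝ) / (n:ℝ) ^ ((3:ℝ)/2) := by rw [Real.rpow_one]
        rw [h2, h3]
        ring
      calc 1 - ∑ x ∈ C n, ∏ i, P₁ (x i) ≤ ((n:ℝ) * V) / (t n) ^ 2 := hcheb
        _ = V * (n:ℝ) ^ (-(1/2) : ℝ) := heq
    have hlb : ∀ n : ℕ, 0 ≤ 1 - ∑ x ∈ C n, ∏ i, P₁ (x i) := fun n => by linarith [hsumle1 n]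
    have hVt : Tendsto (fun n : ℕ => V * (n:ℝ) ^ (-(1/2):ℝ)) atTop (nhds 0) := by
      have h := ((tendsto_rpow_neg_atTop (by norm_num : (0:ℝ) < 1/2)).comp
        (tendsto_natCast_atTop_atTop (R := ℝ))).const_mul V
      simpa using h
    exact tendsto_of_tendsto_of_tendsto_of_le_of_le' tendsto_const_nhds hVt
      (Filter.Eventually.of_forall hlb)
      (by filter_upwards [eventually_ge_atTop 1] with n hn; exact hub n hn)
  refine ⟨C, hA, ?_⟩
  -- Part B
  have hprod : ∀ (n : ℕ) (x : Fin n → A), ∏ i, P₂ (x i)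
      = (∏ i, P₁ (x i)) * Real.exp (-((∑ i, g (x i)) + n * D)) := by
    intro n x
    have hfd : ∀ a, P₂ a = P₁ a * Real.exp (-(Real.log (P₁ a / P₂ a))) := by
      intro a
      rw [Real.log_div (hP₁ a).ne' (hP₂ a).ne', neg_sub, Real.exp_sub,
        Real.exp_log (hP₂ a), Real.exp_log (hP₁ a)]
      field_simp [(hP₁ a).ne']
    have h1 : ∑ i, Real.log (P₁ (x i) / P₂ (x i)) = (∑ i, g (x i)) + n * D := by
      simp only [hgdef]
      rw [Finset.sum_sub_distrib, Finset.sum_const, card_univ, Fintype.card_fin,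
        nsmul_eq_mul]
      ring
    calc ∏ i, P₂ (x i)
        = ∏ i, (P₁ (x i) * Real.exp (-(Real.log (P₁ (x i) / P₂ (x i))))) :=
          Finset.prod_congr rfl fun i _ => hfd (x i)
      _ = (∏ i, P₁ (x i)) * ∏ i, Real.exp (-(Real.log (P₁ (x i) / P₂ (x i)))) :=
          Finset.prod_mul_distrib
      _ = (∏ i, P₁ (x i)) * Real.exp (-((∑ i, g (x i)) + n * D)) := by
          rw [← Real.exp_sum, ← h1, ← Finset.sum_neg_distrib]
  have key : ∀ n : ℕ, 1 ≤ n → (1:ℝ)/2 ≤ ∑ x ∈ C n, ∏ i, P₁ (x i) →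
      -D - t n / n + Real.log (1/2) / n
        ≤ (1/(n:ℝ)) * Real.log (∑ x ∈ C n, ∏ i, P₂ (x i)) ∧
      (1/(n:ℝ)) * Real.log (∑ x ∈ C n, ∏ i, P₂ (x i)) ≤ -D + t n / n := by
    intro n hn hhalf
    have hn0 : (0:ℝ) < n := by exact_mod_cast hn
    have hxg : ∀ x ∈ C n, |∑ i, g (x i)| ≤ t n := by
      intro x hx
      rw [hCdef] at hx
      exact (Finset.mem_filter.mp hx).2
    have hub2 : ∑ x ∈ C n, ∏ i, P₂ (x i) ≤ Real.exp (-(n*D) + t n) := by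
      calc ∑ x ∈ C n, ∏ i, P₂ (x i)
          ≤ ∑ x ∈ C n, (∏ i, P₁ (x i)) * Real.exp (-(n*D) + t n) := by
            apply Finset.sum_le_sum
            intro x hx
            rw [hprod]
            refine mul_le_mul_of_nonneg_left ?_ (prod_nonneg fun i _ => (hP₁ _).le)
            apply Real.exp_le_exp.mpr
            have h := (abs_le.mp (hxg x hx)).1
            linarith
        _ = (∑ x ∈ C n, ∏ i, P₁ (x i)) * Real.exp (-(n*D) + t n) := (Finset.sum_mul _ _ _).symm
        _ ≤ 1 * Real.exp (-(n*D) + t n) :=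
            mul_le_mul_of_nonneg_right (hsumle1 n) (Real.exp_nonneg _)
        _ = Real.exp (-(n*D) + t n) := one_mul _
    have hlb2 : Real.exp (-(n*D) - t n) * (1/2) ≤ ∑ x ∈ C n, ∏ i, P₂ (x i) := by
      calc Real.exp (-(n*D) - t n) * (1/2)
          ≤ Real.exp (-(n*D) - t n) * ∑ x ∈ C n, ∏ i, P₁ (x i) :=
            mul_le_mul_of_nonneg_left hhalf (Real.exp_nonneg _)
        _ = ∑ x ∈ C n, Real.exp (-(n*D) - t n) * ∏ i, P₁ (x i) := Finset.mul_sum _ _ _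
        _ ≤ ∑ x ∈ C n, ∏ i, P₂ (x i) := by
            apply Finset.sum_le_sum
            intro x hx
            rw [hprod, mul_comm (∏ i, P₁ (x i))]
            refine mul_le_mul_of_nonneg_right ?_ (prod_nonneg fun i _ => (hP₁ _).le)
            apply Real.exp_le_exp.mpr
            have h := (abs_le.mp (hxg x hx)).2
            linarith
    have hpos : 0 < ∑ x ∈ C n, ∏ i, P₂ (x i) :=
      lt_of_lt_of_le (by positivity) hlb2
    have hlog1 : Real.log (∑ x ∈ C n, ∏ i, P₂ (x i)) ≤ -(n*D) + t n := by
      have := Real.log_le_log hpos hub2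
      rwa [Real.log_exp] at this
    have hlog2 : -(n*D) - t n + Real.log (1/2) ≤ Real.log (∑ x ∈ C n, ∏ i, P₂ (x i)) := by
      have h := Real.log_le_log (by positivity) hlb2
      rwa [Real.log_mul (Real.exp_ne_zero _) (by norm_num), Real.log_exp] at h
    constructor
    · have h := mul_le_mul_of_nonneg_left hlog2 (le_of_lt (one_div_pos.mpr hn0))
      have heq : (1/(n:ℝ)) * (-(n*D) - t n + Real.log (1/2))
          = -D - t n / n + Real.log (1/2) / n := by
        field_simp
      linarith [heq ▸ h]
    · have h := mul_le_mul_of_nonneg_left hlog1 (le_of_lt (one_div_pos.mpr hn0))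
      have heq : (1/(n:ℝ)) * (-(n*D) + t n) = -D + t n / n := by
        field_simp
      linarith [heq ▸ h]
  have hhalf_ev : ∀ᶠ n in atTop, (1:ℝ)/2 ≤ ∑ x ∈ C n, ∏ i, P₁ (x i) := by
    have h := hA.eventually (gt_mem_nhds (by norm_num : (0:ℝ) < 1/2))
    filter_upwards [h] with n hn
    linarith
  have h14 : Tendsto (fun n : ℕ => t n / n) atTop (nhds 0) := by
    have hbase : Tendsto (fun n : ℕ => (n:ℝ) ^ (-(1/4):ℝ)) atTop (nhds 0) :=
      (tendsto_rpow_neg_atTop (by norm_num : (0:ℝ) < 1/4)).comp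
        (tendsto_natCast_atTop_atTop (R := ℝ))
    apply hbase.congr'
    filter_upwards [eventually_ge_atTop 1] with n hn
    have hn0 : (0:ℝ) < n := by exact_mod_cast hn
    simp only [htdef]
    calc (n:ℝ) ^ (-(1/4):ℝ) = (n:ℝ) ^ ((3:ℝ)/4 - 1) := by norm_num
      _ = (n:ℝ) ^ ((3:ℝ)/4) / (n:ℝ) ^ (1:ℝ) := Real.rpow_sub hn0 _ _
      _ = (n:ℝ) ^ ((3:ℝ)/4) / (n:ℝ) := by rw [Real.rpow_one]
  have h15 : Tendsto (fun n : ℕ => Real.log (1/2) / n) atTop (nhds 0) := by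
    have := tendsto_one_div_atTop_nhds_zero_nat.const_mul (Real.log (1/2))
    simpa [div_eq_mul_inv, mul_comm] using this
  have hl : Tendsto (fun n : ℕ => -D - t n / n + Real.log (1/2) / n) atTop (nhds (-D)) := by
    have h := ((tendsto_const_nhds : Tendsto (fun _ : ℕ => -D) atTop (nhds (-D))).sub h14).add h15
    simpa using h
  have hu : Tendsto (fun n : ℕ => -D + t n / n) atTop (nhds (-D)) := by
    have h := (tendsto_const_nhds : Tendsto (fun _ : ℕ => -D) atTop (nhds (-D))).add h14
    simpa using h
  refine tendsto_of_tendsto_of_tendsto_of_le_of_le' hl hu ?_ ?_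
  · filter_upwards [eventually_ge_atTop 1, hhalf_ev] with n h1 h2
    exact (key n h1 h2).1
  · filter_upwards [eventually_ge_atTop 1, hhalf_ev] with n h1 h2
    exact (key n h1 h2).2
end

section
/- Let A be a finite set, P a probability mass function on A with full support, and ρ_n the normalized Hamming distortion on A^n. For any n ≥ 1 and any nonempty C_n ⊆ A^n, with D = E_{P^n}[ρ_n(X_1^n, C_n)], one has P^n(C_n) ≥ e^{n R_C(D)}, where R_C(D) = inf_{W: W_X=P, E_W[1{X≠Y}]≤D} {H(W‖W_X×W_Y) + E_{W_Y}[log P(Y)]}. -/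
open scoped BigOperators
open Finset

/-- Log-sum inequality. -/
lemma logSum {ι : Type*} (s : Finset ι) (a b : ι → ℝ)
    (ha : ∀ i ∈ s, 0 ≤ a i) (hb : ∀ i ∈ s, 0 ≤ b i)
    (hab : ∀ i ∈ s, b i = 0 → a i = 0) :
    (∑ i ∈ s, a i) * Real.log ((∑ i ∈ s, a i) / (∑ i ∈ s, b i))
      ≤ ∑ i ∈ s, a i * Real.log (a i / b i) := by
  set Sa := ∑ i ∈ s, a i with hSa
  set Sb := ∑ i ∈ s, b i with hSb
  rcases eq_or_lt_of_le (Finset.sum_nonneg ha) with h0 | hSapos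
  · -- Sa = 0, all a i = 0
    have : ∀ i ∈ s, a i = 0 := by
      intro i hi
      have := (Finset.sum_eq_zero_iff_of_nonneg ha).1 h0.symm
      exact this i hi
    rw [show Sa = 0 from h0.symm]
    simp only [zero_mul]
    apply Finset.sum_nonneg
    intro i hi; rw [this i hi]; simp
  · have hSbpos : 0 < Sb := by
      rcases eq_or_lt_of_le (Finset.sum_nonneg hb) with h0 | h
      · exfalso
        have hball : ∀ i ∈ s, b i = 0 := (Finset.sum_eq_zero_iff_of_nonneg hb).1 h0.symm
        have : Sa = 0 := Finset.sum_eq_zero fun i hi => hab i hi (hball i hi)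
        exact absurd this (ne_of_gt hSapos)
      · exact h
    -- termwise : a i * log (Sa/Sb) + a i - b i * (Sa/Sb) ≤ a i * log (a i / b i)
    have key : ∀ i ∈ s, a i * Real.log (Sa/Sb) + a i - b i * (Sa/Sb)
        ≤ a i * Real.log (a i / b i) := by
      intro i hi
      rcases eq_or_lt_of_le (ha i hi) with h0 | hpos
      · rw [← h0]
        have : 0 ≤ b i * (Sa/Sb) := mul_nonneg (hb i hi) (le_of_lt (div_pos hSapos hSbpos))
        simp; linarith
      · have hbi : 0 < b i := by
          rcases eq_or_lt_of_le (hb i hi) with h0 | h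
          · exact absurd (hab i hi h0.symm) (ne_of_gt hpos)
          · exact h
        have ht : 0 < a i * Sb / (b i * Sa) :=
          div_pos (mul_pos hpos hSbpos) (mul_pos hbi hSapos)
        have hlog := Real.one_sub_inv_le_log_of_pos ht
        have hinv : (a i * Sb / (b i * Sa))⁻¹ = b i * Sa / (a i * Sb) := by
          field_simp
        rw [hinv] at hlog
        have hlogeq : Real.log (a i * Sb / (b i * Sa))
            = Real.log (a i / b i) - Real.log (Sa / Sb) := by
          rw [← Real.log_div (by positivity) (by positivity)]
          congr 1
          field_simp
        rw [hlogeq] at hlog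
        have hmul := mul_le_mul_of_nonneg_left hlog (le_of_lt hpos)
        have e1 : a i * (1 - b i * Sa / (a i * Sb)) = a i - b i * (Sa/Sb) := by
          field_simp
        rw [e1, mul_sub] at hmul
        linarith
    have hs := Finset.sum_le_sum key
    rw [Finset.sum_sub_distrib, Finset.sum_add_distrib, ← Finset.sum_mul, ← Finset.sum_mul] at hs
    rw [← hSa, ← hSb] at hs
    have : Sb * (Sa/Sb) = Sa := by field_simp
    rw [this] at hs
    linarith

lemma sum_pi_mul {A : Type*} [Fintype A] [DecidableEq A] {n : ℕ} (P : A → ℝ)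
    (hP1 : ∑ a, P a = 1) (i : Fin n) (f : A → ℝ) :
    ∑ x : Fin n → A, (∏ j, P (x j)) * f (x i) = ∑ a, P a * f a := by
  have h1 : ∀ x : Fin n → A, (∏ j, P (x j)) * f (x i)
      = ∏ j, (P (x j) * if i = j then f (x j) else 1) := by
    intro x
    rw [Finset.prod_mul_distrib, Finset.prod_ite_eq]
    simp
  simp_rw [h1]
  rw [← Fintype.prod_sum (fun (j : Fin n) (a : A) => P a * if i = j then f a else 1)]
  have h2 : ∀ j : Fin n, (∑ a, P a * if i = j then f a else 1)
      = if i = j then ∑ a, P a * f a else 1 := by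
    intro j
    by_cases h : i = j <;> simp [h, hP1]
  simp_rw [h2]
  rw [Finset.prod_ite_eq]
  simp

/-- `W` is a feasible coupling: a pmf on `A × A` with first marginal `P` and
expected distortion at most `D`. -/
def Feasible {A : Type*} [Fintype A] (P : A → ℝ) (ρ : A → A → ℝ) (D : ℝ)
    (W : A × A → ℝ) : Prop :=
  (∀ p, 0 ≤ W p) ∧ (∑ p, W p) = 1 ∧ (∀ x, (∑ y, W (x, y)) = P x) ∧
    (∑ p : A × A, W p * ρ p.1 p.2) ≤ D

/-- The objective `H(W ‖ W_X × W_Y) + E_{W_Y}[log M(Y)]`. -/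
noncomputable def obj {A : Type*} [Fintype A] (M : A → ℝ) (W : A × A → ℝ) : ℝ :=
  (∑ p : A × A, W p * Real.log (W p / ((∑ y, W (p.1, y)) * (∑ x, W (x, p.2)))))
    + ∑ y, (∑ x, W (x, y)) * Real.log (M y)

/-- The rate function `R(D) = inf { H(W‖W_X×W_Y) + E_{W_Y}[log M] : W_X = P, E_W ρ ≤ D }`. -/
noncomputable def massRate {A : Type*} [Fintype A] (P : A → ℝ) (ρ : A → A → ℝ)
    (M : A → ℝ) (D : ℝ) : ℝ :=
  sInf (obj M '' {W | Feasible P ρ D W})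

lemma obj_lb {A : Type*} [Fintype A] (P : A → ℝ) (hP : ∀ a, 0 < P a)
    (hP1 : ∑ a, P a = 1) (W : A × A → ℝ) (hnn : ∀ p, 0 ≤ W p)
    (hsum : (∑ p, W p) = 1) (hmarg : ∀ a, (∑ b, W (a, b)) = P a) :
    (∑ b, Real.log (P b)) ≤ obj P W := by
  classical
  set Wy : A → ℝ := fun b => ∑ a, W (a, b) with hWydef
  have hWynn : ∀ b, 0 ≤ Wy b := fun b => Finset.sum_nonneg fun a _ => hnn (a, b)
  have hWysum : (∑ b, Wy b) = 1 := by
    rw [← hsum, Fintype.sum_prod_type]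
    exact Finset.sum_comm
  have hobj : obj P W = (∑ p : A × A, W p * Real.log (W p / (P p.1 * Wy p.2)))
      + ∑ b, Wy b * Real.log (P b) := by
    unfold obj
    congr 1
    refine Finset.sum_congr rfl fun p _ => ?_
    rw [hmarg p.1]
  have hb : (∑ p : A × A, P p.1 * Wy p.2) = 1 := by
    rw [Fintype.sum_prod_type]
    simp_rw [← Finset.mul_sum, hWysum, mul_one]
    exact hP1
  have hKL : 0 ≤ ∑ p : A × A, W p * Real.log (W p / (P p.1 * Wy p.2)) := by
    have hLS := logSum Finset.univ (fun p : A × A => W p) (fun p => P p.1 * Wy p.2)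
      (fun p _ => hnn p) (fun p _ => mul_nonneg (hP _).le (hWynn _))
      (fun p _ h => by
        rcases mul_eq_zero.1 h with h1 | h1
        · exact absurd h1 (ne_of_gt (hP _))
        · have h2 : W p ≤ Wy p.2 := by
            simpa using Finset.single_le_sum (f := fun a => W (a, p.2))
              (fun a _ => hnn (a, p.2)) (Finset.mem_univ p.1)
          rw [h1] at h2
          exact le_antisymm h2 (hnn p))
    rw [hsum, hb, div_one, Real.log_one, mul_zero] at hLS
    exact hLS
  have hsecond : (∑ b, Real.log (P b)) ≤ ∑ b, Wy b * Real.log (P b) := by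
    apply Finset.sum_le_sum
    intro b _
    have hPle1 : P b ≤ 1 := by
      rw [← hP1]
      exact Finset.single_le_sum (fun a _ => (hP a).le) (Finset.mem_univ b)
    have hlognp : Real.log (P b) ≤ 0 := Real.log_nonpos (hP b).le hPle1
    have hWyle1 : Wy b ≤ 1 := by
      rw [← hWysum]
      exact Finset.single_le_sum (fun c _ => hWynn c) (Finset.mem_univ b)
    nlinarith [hWynn b]
  rw [hobj]
  linarith

set_option maxHeartbeats 2000000

/-- Corollary 3(i): for normalized Hamming distortion, with
`D = E_{Pⁿ}[ρ_n(X₁ⁿ, C_n)]`, one has `Pⁿ(C_n) ≥ exp (n R_C(D))`. -/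
theorem stmt_11 {A : Type*} [Fintype A] [DecidableEq A] (P : A → ℝ)
    (hP : ∀ a, 0 < P a) (hP1 : ∑ a, P a = 1)
    (n : ℕ) (hn : 1 ≤ n) (C : Finset (Fin n → A)) (hC : C.Nonempty) :
    Real.exp ((n : ℝ) * massRate P (fun a b => if a = b then 0 else 1) P
        (∑ x : Fin n → A, (∏ i, P (x i)) *
          C.inf' hC (fun y => (1 / (n : ℝ)) * ∑ i, if x i = y i then (0:ℝ) else 1)))
      ≤ ∑ x ∈ C, ∏ i, P (x i) := by
  classical
  have hn0 : (0:ℝ) < (n:ℝ) := by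
    have : 0 < n := hn
    exact_mod_cast this
  set ρ : A → A → ℝ := fun a b => if a = b then 0 else 1 with hρdef
  set μ : (Fin n → A) → ℝ := fun x => ∏ j, P (x j) with hμdef
  have hμpos : ∀ x, 0 < μ x := fun x => Finset.prod_pos fun j _ => hP (x j)
  have hμ1 : (∑ x : Fin n → A, μ x) = 1 := by
    have h := Fintype.prod_sum (fun (_ : Fin n) (a : A) => P a)
    simp only [hμdef]
    rw [← h, hP1]
    simp
  -- the nearest-codeword map
  have hex : ∀ x : Fin n → A, ∃ y, y ∈ C ∧
      C.inf' hC (fun y => (1 / (n:ℝ)) * ∑ i, if x i = y i then (0:ℝ) else 1)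
        = (1 / (n:ℝ)) * ∑ i, if x i = y i then (0:ℝ) else 1 :=
    fun x => Finset.exists_mem_eq_inf' hC _
  choose φ hφC hφval using hex
  set D : ℝ := ∑ x : Fin n → A, μ x *
      C.inf' hC (fun y => (1 / (n:ℝ)) * ∑ i, if x i = y i then (0:ℝ) else 1) with hDdef
  -- single–letter couplings
  set Wi : Fin n → A × A → ℝ :=
    fun i p => ∑ x : Fin n → A, if x i = p.1 ∧ φ x i = p.2 then μ x else 0 with hWidef
  set W : A × A → ℝ := fun p => (∑ i, Wi i p) / n with hWdef
  set Qi : Fin n → A → ℝ := fun i b => ∑ a, Wi i (a, b) with hQidef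
  have hWinn : ∀ i p, 0 ≤ Wi i p := by
    intro i p
    apply Finset.sum_nonneg
    intro x _
    split
    · exact (hμpos x).le
    · exact le_refl 0
  -- key reduction: sums against Wi i are sums against μ
  have key1 : ∀ (i : Fin n) (F : A → A → ℝ),
      (∑ p : A × A, Wi i p * F p.1 p.2) = ∑ x : Fin n → A, μ x * F (x i) (φ x i) := by
    intro i F
    calc (∑ p : A × A, Wi i p * F p.1 p.2)
        = ∑ p : A × A, ∑ x : Fin n → A,
            if x i = p.1 ∧ φ x i = p.2 then μ x * F p.1 p.2 else 0 := by
          refine Finset.sum_congr rfl fun p _ => ?_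
          simp only [hWidef, Finset.sum_mul, ite_mul, zero_mul]
      _ = ∑ x : Fin n → A, ∑ p : A × A,
            if x i = p.1 ∧ φ x i = p.2 then μ x * F p.1 p.2 else 0 := Finset.sum_comm
      _ = ∑ x : Fin n → A, μ x * F (x i) (φ x i) := by
          refine Finset.sum_congr rfl fun x _ => ?_
          rw [Fintype.sum_prod_type]
          simp [ite_and, Finset.sum_ite_eq]
  have hWitot : ∀ i : Fin n, (∑ p : A × A, Wi i p) = 1 := by
    intro i
    have h := key1 i (fun _ _ => 1)
    simpa [hμ1] using h
  have hWimarg : ∀ (i : Fin n) (a : A), (∑ b, Wi i (a, b)) = P a := by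
    intro i a
    have h1 : (∑ b, Wi i (a, b)) = ∑ x : Fin n → A, μ x * (if x i = a then 1 else 0) := by
      simp only [hWidef]
      rw [Finset.sum_comm]
      refine Finset.sum_congr rfl fun x _ => ?_
      by_cases h : x i = a <;> simp [h, ite_and, Finset.sum_ite_eq]
    rw [h1]
    have h2 : ∀ x : Fin n → A, μ x * (if x i = a then 1 else 0)
        = (∏ j, P (x j)) * (fun c => if c = a then 1 else 0) (x i) := by
      intro x; simp [hμdef]
    simp_rw [h2]
    rw [sum_pi_mul P hP1 i (fun c => if c = a then 1 else 0)]
    simp [Finset.sum_ite_eq']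
  have hQinn : ∀ i b, 0 ≤ Qi i b := by
    intro i b
    exact Finset.sum_nonneg fun a _ => hWinn i (a, b)
  have hWiQi : ∀ (i : Fin n) (p : A × A), Wi i p ≤ Qi i p.2 := by
    intro i p
    simpa using Finset.single_le_sum (f := fun a => Wi i (a, p.2))
      (fun a _ => hWinn i (a, p.2)) (Finset.mem_univ p.1)
  have hWige : ∀ (i : Fin n) (x : Fin n → A), μ x ≤ Wi i (x i, φ x i) := by
    intro i x
    have := Finset.single_le_sum
      (f := fun x' : Fin n → A => if x' i = x i ∧ φ x' i = φ x i then μ x' else 0)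
      (fun x' _ => by by_cases h : x' i = x i ∧ φ x' i = φ x i <;> simp [h, (hμpos x').le]) (Finset.mem_univ x)
    simpa [hWidef] using this
  have hQipos : ∀ (i : Fin n) (x : Fin n → A), 0 < Qi i (φ x i) :=
    fun i x => lt_of_lt_of_le (hμpos x) (le_trans (hWige i x) (hWiQi i (x i, φ x i)))
  -- marginals of W
  have hWnn : ∀ p, 0 ≤ W p := fun p =>
    div_nonneg (Finset.sum_nonneg fun i _ => hWinn i p) hn0.le
  have hWmarg : ∀ a, (∑ b, W (a, b)) = P a := by
    intro a
    simp only [hWdef]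
    rw [← Finset.sum_div, Finset.sum_comm]
    simp_rw [hWimarg]
    rw [Finset.sum_const, Finset.card_univ, Fintype.card_fin, nsmul_eq_mul, mul_comm,
      mul_div_assoc, div_self hn0.ne', mul_one]
  have hWsum : (∑ p, W p) = 1 := by
    simp only [hWdef]
    rw [← Finset.sum_div, Finset.sum_comm]
    simp_rw [hWitot]
    rw [Finset.sum_const, Finset.card_univ, Fintype.card_fin, nsmul_eq_mul, mul_one,
      div_self hn0.ne']
  have hWy : ∀ b, (∑ a, W (a, b)) = (∑ i, Qi i b) / n := by
    intro b
    simp only [hWdef]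
    rw [← Finset.sum_div, Finset.sum_comm]
  have hWdist : (∑ p : A × A, W p * ρ p.1 p.2) = D := by
    have e1 : ∀ p : A × A, W p * ρ p.1 p.2 = (∑ i, Wi i p * ρ p.1 p.2) / n := by
      intro p
      simp only [hWdef]
      rw [div_mul_eq_mul_div, Finset.sum_mul]
    simp_rw [e1]
    rw [← Finset.sum_div]
    have e2 : (∑ p : A × A, ∑ i, Wi i p * ρ p.1 p.2)
        = ∑ x : Fin n → A, μ x * (∑ i, ρ (x i) (φ x i)) := by
      calc (∑ p : A × A, ∑ i, Wi i p * ρ p.1 p.2)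
          = ∑ i, ∑ p : A × A, Wi i p * ρ p.1 p.2 := Finset.sum_comm
        _ = ∑ i, ∑ x : Fin n → A, μ x * ρ (x i) (φ x i) :=
            Finset.sum_congr rfl fun i _ => key1 i ρ
        _ = ∑ x : Fin n → A, ∑ i, μ x * ρ (x i) (φ x i) := Finset.sum_comm
        _ = ∑ x : Fin n → A, μ x * (∑ i, ρ (x i) (φ x i)) := by
            exact Finset.sum_congr rfl fun x _ => (Finset.mul_sum _ _ _).symm
    rw [e2, hDdef, Finset.sum_div]
    refine Finset.sum_congr rfl fun x _ => ?_
    rw [hφval x]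
    simp only [hρdef]
    ring
  have hFeas : Feasible P ρ D W :=
    ⟨hWnn, hWsum, hWmarg, le_of_eq hWdist⟩
  -- the per-coordinate objective
  set g : Fin n → ℝ := fun i =>
    (∑ p : A × A, Wi i p * Real.log (Wi i p / (P p.1 * Qi i p.2)))
      + ∑ b, Qi i b * Real.log (P b) with hgdef
  have hobj : obj P W
      = (∑ p : A × A, W p * Real.log (W p / (P p.1 * ((∑ i, Qi i p.2) / n))))
        + ∑ b, ((∑ i, Qi i b) / n) * Real.log (P b) := by
    unfold obj
    congr 1
    · refine Finset.sum_congr rfl fun p _ => ?_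
      rw [hWmarg p.1, hWy p.2]
    · refine Finset.sum_congr rfl fun b _ => ?_
      rw [hWy b]
  have hdiv : ∀ u v : ℝ, (u / (n:ℝ)) / (v / (n:ℝ)) = u / v := by
    intro u v
    rcases eq_or_ne v 0 with rfl | hv
    · simp
    · field_simp
  have part1 : (n:ℝ) * (∑ p : A × A, W p * Real.log (W p / (P p.1 * ((∑ i, Qi i p.2) / n))))
      ≤ ∑ i, ∑ p : A × A, Wi i p * Real.log (Wi i p / (P p.1 * Qi i p.2)) := by
    rw [Finset.mul_sum]
    have hb : ∀ p : A × A, (n:ℝ) * (W p * Real.log (W p / (P p.1 * ((∑ i, Qi i p.2) / n))))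
        ≤ ∑ i, Wi i p * Real.log (Wi i p / (P p.1 * Qi i p.2)) := by
      intro p
      have e3 : W p / (P p.1 * ((∑ i, Qi i p.2) / n))
          = (∑ i, Wi i p) / (∑ i, P p.1 * Qi i p.2) := by
        simp only [hWdef]
        rw [← mul_div_assoc, Finset.mul_sum]
        exact hdiv _ _
      have e4 : (n:ℝ) * W p = ∑ i, Wi i p := by
        simp only [hWdef]
        field_simp
      rw [e3, ← mul_assoc, e4]
      exact logSum Finset.univ (fun i => Wi i p) (fun i => P p.1 * Qi i p.2)
        (fun i _ => hWinn i p) (fun i _ => mul_nonneg (hP p.1).le (hQinn i p.2))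
        (fun i _ h => by
          rcases mul_eq_zero.1 h with h1 | h1
          · exact absurd h1 (ne_of_gt (hP p.1))
          · have h2 := hWiQi i p
            have h3 := hWinn i p
            rw [h1] at h2
            linarith)
    calc (∑ p : A × A, (n:ℝ) * (W p * Real.log (W p / (P p.1 * ((∑ i, Qi i p.2) / n)))))
        ≤ ∑ p : A × A, ∑ i, Wi i p * Real.log (Wi i p / (P p.1 * Qi i p.2)) :=
          Finset.sum_le_sum fun p _ => hb p
      _ = ∑ i, ∑ p : A × A, Wi i p * Real.log (Wi i p / (P p.1 * Qi i p.2)) :=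
          Finset.sum_comm
  have part2 : (n:ℝ) * ∑ b, ((∑ i, Qi i b) / n) * Real.log (P b)
      = ∑ i, ∑ b, Qi i b * Real.log (P b) := by
    calc (n:ℝ) * ∑ b, ((∑ i, Qi i b) / n) * Real.log (P b)
        = ∑ b, ∑ i, Qi i b * Real.log (P b) := by
          rw [Finset.mul_sum]
          refine Finset.sum_congr rfl fun b _ => ?_
          rw [← Finset.sum_mul]
          field_simp
      _ = ∑ i, ∑ b, Qi i b * Real.log (P b) := Finset.sum_comm
  have step1 : (n:ℝ) * obj P W ≤ ∑ i, g i := by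
    rw [hobj, mul_add]
    simp only [hgdef]
    rw [Finset.sum_add_distrib]
    exact add_le_add part1 (le_of_eq part2)
  -- output distribution on codewords and conditional product reference
  set Q : (Fin n → A) → ℝ := fun y => ∑ x : Fin n → A, if φ x = y then μ x else 0 with hQdef
  set r : (Fin n → A) → (Fin n → A) → ℝ :=
    fun y x => ∏ i, Wi i (x i, y i) / Qi i (y i) with hrdef
  have hQnn : ∀ y, 0 ≤ Q y := by
    intro y
    apply Finset.sum_nonneg
    intro x _
    split
    · exact (hμpos x).le
    · exact le_refl 0
  have hQfiber : ∀ y, Q y = ∑ x ∈ Finset.univ.filter (fun x => φ x = y), μ x := by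
    intro y
    simp only [hQdef]
    rw [Finset.sum_filter]
  have hQgeμ : ∀ x, μ x ≤ Q (φ x) := by
    intro x
    have := Finset.single_le_sum
      (f := fun x' : Fin n → A => if φ x' = φ x then μ x' else 0)
      (fun x' _ => by by_cases h : φ x' = φ x <;> simp [h, (hμpos x').le])
      (Finset.mem_univ x)
    simpa [hQdef] using this
  have hQposφ : ∀ x, 0 < Q (φ x) := fun x => lt_of_lt_of_le (hμpos x) (hQgeμ x)
  have hWiposx : ∀ (i : Fin n) (x : Fin n → A), 0 < Wi i (x i, φ x i) :=
    fun i x => lt_of_lt_of_le (hμpos x) (hWige i x)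
  have hrnn : ∀ y x, 0 ≤ r y x := by
    intro y x
    simp only [hrdef]
    exact Finset.prod_nonneg fun i _ => div_nonneg (hWinn i _) (hQinn i _)
  have hrposx : ∀ x, 0 < r (φ x) x := by
    intro x
    simp only [hrdef]
    exact Finset.prod_pos fun i _ => div_pos (hWiposx i x) (hQipos i x)
  have hrsum : ∀ y : Fin n → A, (∀ i, Qi i (y i) ≠ 0) → (∑ x : Fin n → A, r y x) = 1 := by
    intro y hy
    simp only [hrdef]
    rw [← Fintype.prod_sum (fun (i : Fin n) (a : A) => Wi i (a, y i) / Qi i (y i))]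
    rw [Finset.prod_eq_one]
    intro i _
    rw [← Finset.sum_div]
    exact div_self (hy i)
  set G : ℝ := ∑ x : Fin n → A, μ x * Real.log (μ (φ x) / Q (φ x)) with hGdef
  have step2 : (∑ i, g i) ≤ G := by
    -- rewrite g i through key1
    have hgix : ∀ i : Fin n, g i = ∑ x : Fin n → A, μ x *
        (Real.log (Wi i (x i, φ x i) / (P (x i) * Qi i (φ x i)))
          + Real.log (P (φ x i))) := by
      intro i
      simp only [hgdef]
      have e5 : (∑ b, Qi i b * Real.log (P b))
          = ∑ p : A × A, Wi i p * Real.log (P p.2) := by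
        calc (∑ b, Qi i b * Real.log (P b))
            = ∑ b, ∑ a, Wi i (a, b) * Real.log (P b) := by
              refine Finset.sum_congr rfl fun b _ => ?_
              simp only [hQidef]
              rw [Finset.sum_mul]
          _ = ∑ a, ∑ b, Wi i (a, b) * Real.log (P b) := Finset.sum_comm
          _ = ∑ p : A × A, Wi i p * Real.log (P p.2) :=
              (Fintype.sum_prod_type (f := fun p : A × A => Wi i p * Real.log (P p.2))).symm
      have e6 : (∑ p : A × A, Wi i p * Real.log (Wi i p / (P p.1 * Qi i p.2)))
          = ∑ x : Fin n → A, μ x *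
              Real.log (Wi i (x i, φ x i) / (P (x i) * Qi i (φ x i))) :=
        key1 i (fun a b => Real.log (Wi i (a, b) / (P a * Qi i b)))
      have e7 : (∑ p : A × A, Wi i p * Real.log (P p.2))
          = ∑ x : Fin n → A, μ x * Real.log (P (φ x i)) :=
        key1 i (fun a b => Real.log (P b))
      rw [e5, e6, e7, ← Finset.sum_add_distrib]
      exact Finset.sum_congr rfl fun x _ => (mul_add _ _ _).symm
    have hsum_g : (∑ i, g i) = ∑ x : Fin n → A, μ x *
        Real.log (μ (φ x) * r (φ x) x / μ x) := by
      simp_rw [hgix]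
      rw [Finset.sum_comm]
      refine Finset.sum_congr rfl fun x _ => ?_
      rw [← Finset.mul_sum]
      congr 1
      -- pointwise log identity
      have h1 : ∀ i : Fin n,
          Real.log (Wi i (x i, φ x i) / (P (x i) * Qi i (φ x i))) + Real.log (P (φ x i))
          = (Real.log (Wi i (x i, φ x i)) - Real.log (Qi i (φ x i)))
            + Real.log (P (φ x i)) - Real.log (P (x i)) := by
        intro i
        rw [Real.log_div (hWiposx i x).ne' (mul_pos (hP (x i)) (hQipos i x)).ne',
          Real.log_mul (hP (x i)).ne' (hQipos i x).ne']
        ring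
      simp_rw [h1]
      have hlogμy : Real.log (μ (φ x)) = ∑ i, Real.log (P (φ x i)) := by
        simp only [hμdef]
        exact Real.log_prod fun i _ => (hP _).ne'
      have hlogμx : Real.log (μ x) = ∑ i, Real.log (P (x i)) := by
        simp only [hμdef]
        exact Real.log_prod fun i _ => (hP _).ne'
      have hlogr : Real.log (r (φ x) x)
          = ∑ i, (Real.log (Wi i (x i, φ x i)) - Real.log (Qi i (φ x i))) := by
        simp only [hrdef]
        rw [Real.log_prod fun i _ => (div_pos (hWiposx i x) (hQipos i x)).ne']
        exact Finset.sum_congr rfl fun i _ =>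
          Real.log_div (hWiposx i x).ne' (hQipos i x).ne'
      rw [Real.log_div (mul_pos (hμpos (φ x)) (hrposx x)).ne' (hμpos x).ne',
        Real.log_mul (hμpos (φ x)).ne' (hrposx x).ne', hlogμy, hlogμx, hlogr,
        Finset.sum_sub_distrib, Finset.sum_add_distrib]
      ring
    -- difference is nonnegative fiberwise
    have hdiff : ∀ x : Fin n → A,
        μ x * Real.log (μ (φ x) / Q (φ x))
          - μ x * Real.log (μ (φ x) * r (φ x) x / μ x)
        = μ x * Real.log (μ x / (Q (φ x) * r (φ x) x)) := by
      intro x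
      rw [← mul_sub]
      congr 1
      rw [← Real.log_div (div_pos (hμpos (φ x)) (hQposφ x)).ne'
        (div_pos (mul_pos (hμpos (φ x)) (hrposx x)) (hμpos x)).ne']
      congr 1
      field_simp [(hμpos (φ x)).ne', (hQposφ x).ne', (hrposx x).ne', (hμpos x).ne']
    have key : 0 ≤ ∑ x : Fin n → A, μ x * Real.log (μ x / (Q (φ x) * r (φ x) x)) := by
      rw [← Finset.sum_fiberwise (Finset.univ : Finset (Fin n → A)) φ
        (fun x => μ x * Real.log (μ x / (Q (φ x) * r (φ x) x)))]
      apply Finset.sum_nonneg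
      intro y _
      rcases Finset.eq_empty_or_nonempty
          (Finset.univ.filter (fun x => φ x = y)) with he | hne
      · rw [he]
        simp
      · obtain ⟨x0, hx0⟩ := hne
        have hx0y : φ x0 = y := (Finset.mem_filter.1 hx0).2
        have hQiy : ∀ i, 0 < Qi i (y i) := fun i => by
          rw [← hx0y]; exact hQipos i x0
        have hQy : 0 < Q y := by rw [← hx0y]; exact hQposφ x0
        have hrfib : ∀ x ∈ Finset.univ.filter (fun x => φ x = y), 0 < r y x := by
          intro x hx
          rw [← (Finset.mem_filter.1 hx).2]
          exact hrposx x
        have hrw : (∑ x ∈ Finset.univ.filter (fun x => φ x = y),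
              μ x * Real.log (μ x / (Q (φ x) * r (φ x) x)))
            = ∑ x ∈ Finset.univ.filter (fun x => φ x = y),
              μ x * Real.log (μ x / (Q y * r y x)) := by
          refine Finset.sum_congr rfl fun x hx => ?_
          rw [(Finset.mem_filter.1 hx).2]
        rw [hrw]
        have hLS := logSum (Finset.univ.filter (fun x => φ x = y)) (fun x => μ x)
          (fun x => Q y * r y x) (fun x _ => (hμpos x).le)
          (fun x hx => (mul_pos hQy (hrfib x hx)).le)
          (fun x hx h => absurd h (mul_pos hQy (hrfib x hx)).ne')
        refine le_trans ?_ hLS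
        have hSa : (∑ x ∈ Finset.univ.filter (fun x => φ x = y), μ x) = Q y :=
          (hQfiber y).symm
        have hSb : (∑ x ∈ Finset.univ.filter (fun x => φ x = y), Q y * r y x)
            = Q y * ∑ x ∈ Finset.univ.filter (fun x => φ x = y), r y x := by
          rw [Finset.mul_sum]
        have hrle : (∑ x ∈ Finset.univ.filter (fun x => φ x = y), r y x) ≤ 1 := by
          rw [← hrsum y (fun i => (hQiy i).ne')]
          exact Finset.sum_le_sum_of_subset_of_nonneg (Finset.filter_subset _ _)
            (fun x _ _ => hrnn y x)
        have hSbpos : 0 < ∑ x ∈ Finset.univ.filter (fun x => φ x = y), Q y * r y x :=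
          Finset.sum_pos (fun x hx => mul_pos hQy (hrfib x hx)) ⟨x0, hx0⟩
        have hble : (∑ x ∈ Finset.univ.filter (fun x => φ x = y), Q y * r y x) ≤ Q y := by
          rw [hSb]
          nlinarith [hQy]
        rw [hSa]
        apply mul_nonneg hQy.le
        apply Real.log_nonneg
        rw [le_div_iff₀ hSbpos]
        linarith
    have := Finset.sum_le_sum (s := (Finset.univ : Finset (Fin n → A)))
      (fun x _ => le_refl (0:ℝ))
    rw [hsum_g, hGdef]
    have hsplit : (∑ x : Fin n → A, μ x * Real.log (μ (φ x) / Q (φ x)))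
        - (∑ x : Fin n → A, μ x * Real.log (μ (φ x) * r (φ x) x / μ x))
        = ∑ x : Fin n → A, μ x * Real.log (μ x / (Q (φ x) * r (φ x) x)) := by
      rw [← Finset.sum_sub_distrib]
      exact Finset.sum_congr rfl fun x _ => hdiff x
    linarith [key, hsplit]
  -- Step 3 : G ≤ log S
  set S : ℝ := ∑ y ∈ C, μ y with hSdef
  have hSpos : 0 < S := Finset.sum_pos (fun y _ => hμpos y) hC
  have step3 : G ≤ Real.log S := by
    have hG2 : G = ∑ y ∈ C, Q y * Real.log (μ y / Q y) := by
      rw [hGdef, ← Finset.sum_fiberwise_of_maps_to (g := φ)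
        (fun x _ => hφC x) (fun x => μ x * Real.log (μ (φ x) / Q (φ x)))]
      refine Finset.sum_congr rfl fun y hy => ?_
      have : (∑ x ∈ Finset.univ.filter (fun x => φ x = y),
            μ x * Real.log (μ (φ x) / Q (φ x)))
          = ∑ x ∈ Finset.univ.filter (fun x => φ x = y),
            μ x * Real.log (μ y / Q y) := by
        refine Finset.sum_congr rfl fun x hx => ?_
        rw [(Finset.mem_filter.1 hx).2]
      rw [this, ← Finset.sum_mul, ← hQfiber y]
    rw [hG2]
    have hQsumC : (∑ y ∈ C, Q y) = 1 := by
      have : (∑ y ∈ C, Q y)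
          = ∑ y ∈ C, ∑ x ∈ Finset.univ.filter (fun x => φ x = y), μ x :=
        Finset.sum_congr rfl fun y _ => hQfiber y
      rw [this, Finset.sum_fiberwise_of_maps_to (fun x _ => hφC x) μ, hμ1]
    have hQab := logSum C (fun y => Q y) (fun y => μ y) (fun y _ => hQnn y)
      (fun y _ => (hμpos y).le) (fun y _ h => absurd h (hμpos y).ne')
    rw [hQsumC, one_mul] at hQab
    have hpt : ∀ y, Q y * Real.log (μ y / Q y) = -(Q y * Real.log (Q y / μ y)) := by
      intro y
      rcases eq_or_lt_of_le (hQnn y) with h0 | hpos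
      · rw [← h0]
        simp
      · rw [show μ y / Q y = (Q y / μ y)⁻¹ by
          rw [← one_div, div_div_eq_mul_div, one_mul]]
        rw [Real.log_inv]
        ring
    simp_rw [hpt]
    rw [Finset.sum_neg_distrib]
    have hlog1S : Real.log (1 / S) = -Real.log S := by
      rw [one_div, Real.log_inv]
    linarith [hQab]
  -- conclusion
  have hbdd : BddBelow (obj P '' {W' | Feasible P ρ D W'}) := by
    refine ⟨∑ b, Real.log (P b), ?_⟩
    rintro z ⟨W', hW', rfl⟩
    exact obj_lb P hP hP1 W' hW'.1 hW'.2.1 hW'.2.2.1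
  have hmem : obj P W ∈ obj P '' {W' | Feasible P ρ D W'} :=
    ⟨W, hFeas, rfl⟩
  have hrate : massRate P ρ P D ≤ obj P W := by
    rw [massRate]
    exact csInf_le hbdd hmem
  have hfinal : (n:ℝ) * massRate P ρ P D ≤ Real.log S := by
    calc (n:ℝ) * massRate P ρ P D ≤ (n:ℝ) * obj P W :=
          mul_le_mul_of_nonneg_left hrate hn0.le
      _ ≤ ∑ i, g i := step1
      _ ≤ G := step2
      _ ≤ Real.log S := step3
  calc Real.exp ((n:ℝ) * massRate P ρ P D)
      ≤ Real.exp (Real.log S) := Real.exp_le_exp.2 hfinal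
    _ = S := Real.exp_log hSpos
end
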